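/- For a, b, c > 0 there exist constants δ > 0 and C ≥ 1 such that for every symmetric traceless real 3×3 matrix Q with dist(Q,𝒩) ≤ δ one has C⁻¹ · dist(Q,𝒩)² ≤ f_b(Q) ≤ C · dist(Q,𝒩)², i.e. near 𝒩 the bulk potential is comparable to the squared distance to 𝒩. -/

import Mathlib

open MeasureTheory Matrix Metric Filter
open scoped RealInnerProductSpace

noncomputable section

attribute [local instance] Matrix.frobeniusNormedAddCommGroup Matrix.frobeniusNormedSpace

/-- The space of real 3×3 matrices. -/
abbrev Mat3 := Matrix (Fin 3) (Fin 3) ℝ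

/-- Euclidean 3-space. -/
abbrev E3 := EuclideanSpace ℝ (Fin 3)

/-- The constant `s₊ = (b² + √(b⁴ + 24a²c²))/(4c²)`. -/
def sPlus (a b c : ℝ) : ℝ := (b ^ 2 + Real.sqrt (b ^ 4 + 24 * a ^ 2 * c ^ 2)) / (4 * c ^ 2)

/-- The matrix `n ⊗ n`, with entries `nᵢnⱼ`. -/
def outer (n : Fin 3 → ℝ) : Mat3 := fun i j => n i * n j

/-- The vacuum manifold `𝒩 = { s₊(n⊗n − (1/3)Id) : n ∈ S² }`. -/
def Nset (a b c : ℝ) : Set Mat3 :=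
  {Q | ∃ n : Fin 3 → ℝ, (∑ i, n i ^ 2) = 1 ∧
    Q = sPlus a b c • (outer n - (1 / 3 : ℝ) • (1 : Mat3))}

/-- Squared Frobenius norm `tr(AAᵀ) = ∑ᵢⱼ Aᵢⱼ²`. -/
def frobSq (A : Mat3) : ℝ := ∑ i, ∑ j, (A i j) ^ 2

/-- Frobenius norm. -/
def frob (A : Mat3) : ℝ := Real.sqrt (frobSq A)

/-- The additive normalization constant `C₀ = a²s₊²/3 + 2b²s₊³/27 − c²s₊⁴/9`. -/
def C0 (a b c : ℝ) : ℝ :=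
  a ^ 2 * (sPlus a b c) ^ 2 / 3 + 2 * b ^ 2 * (sPlus a b c) ^ 3 / 27
    - c ^ 2 * (sPlus a b c) ^ 4 / 9

/-- The bulk potential `f_b(Q)`. -/
def fb (a b c : ℝ) (Q : Mat3) : ℝ :=
  -(a ^ 2 / 2) * (Q * Q).trace - (b ^ 2 / 3) * (Q * Q * Q).trace
    + (c ^ 2 / 4) * ((Q * Q).trace) ^ 2 + C0 a b c

/-- Frobenius distance from `Q` to the manifold `𝒩`. -/
def distN (a b c : ℝ) (Q : Mat3) : ℝ := sInf {d : ℝ | ∃ N ∈ Nset a b c, d = frob (Q - N)}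

/-- Partial derivative `∂_α Q(x)` of a matrix-valued map. -/
def pd (Q : E3 → Mat3) (α : Fin 3) (x : E3) : Mat3 :=
  fderiv ℝ Q x (EuclideanSpace.single α 1)

/-- `|∇Q(x)|² = ∑_α |∂_αQ(x)|²` (Frobenius norms). -/
def gradSq (Q : E3 → Mat3) (x : E3) : ℝ := ∑ α, frobSq (pd Q α x)

/-- Radial derivative `(∂Q/∂r)(x) = ∑_α (x_α/|x|) ∂_αQ(x)`. -/
def radD (Q : E3 → Mat3) (x : E3) : Mat3 := ‖x‖⁻¹ • ∑ α, (x α) • pd Q α x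

/-- Componentwise Laplacian `ΔQ(x)`. -/
def lap (Q : E3 → Mat3) (x : E3) : Mat3 :=
  ∑ α, fderiv ℝ (fun y => pd Q α y) x (EuclideanSpace.single α 1)

/-- The Landau–de Gennes energy density `e_ε(Q) = ½|∇Q|² + ε⁻²f_b(Q)`. -/
def eDen (a b c ε : ℝ) (Q : E3 → Mat3) (x : E3) : ℝ :=
  gradSq Q x / 2 + (ε ^ 2)⁻¹ * fb a b c (Q x)

/-- `Q` is a local minimizer of `I_ε(·, U)`: its energy density is locally integrable on `U`
and it minimizes the energy on every bounded open `D` with closure in `U` among competitors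
with locally integrable energy density agreeing with `Q` outside a compact subset of `D`. -/
def IsLocalMinimizer (a b c ε : ℝ) (U : Set E3) (Q : E3 → Mat3) : Prop :=
  LocallyIntegrableOn (eDen a b c ε Q) U volume ∧
  ∀ D : Set E3, IsOpen D → Bornology.IsBounded D → closure D ⊆ U →
    ∀ V : E3 → Mat3, LocallyIntegrableOn (eDen a b c ε V) U volume →
      (∃ K : Set E3, K ⊆ D ∧ IsCompact K ∧ ∀ x ∈ U \ K, V x = Q x) →
      ∫ x in D, eDen a b c ε Q x ≤ ∫ x in D, eDen a b c ε V x



/-! ### Auxiliary lemmas for `stmt5` -/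

lemma frobSq_nonneg' (A : Mat3) : 0 ≤ frobSq A := by
  unfold frobSq; positivity

lemma frob_nonneg' (A : Mat3) : 0 ≤ frob A := Real.sqrt_nonneg _

lemma frobSq_trace' (A : Mat3) : frobSq A = (A * Aᵀ).trace := by
  simp [frobSq, Matrix.trace, Matrix.diag, Matrix.mul_apply, Matrix.transpose_apply, pow_two]

lemma mat3_conj_trace {U X : Mat3} (hU : Uᵀ * U = 1) : (U * X * Uᵀ).trace = X.trace := by
  rw [Matrix.trace_mul_cycle, hU, Matrix.one_mul]

lemma mat3_conj_mul {U X Y : Mat3} (hU : Uᵀ * U = 1) :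
    (U * X * Uᵀ) * (U * Y * Uᵀ) = U * (X * Y) * Uᵀ := by
  simp only [Matrix.mul_assoc]
  rw [← Matrix.mul_assoc Uᵀ U, hU, Matrix.one_mul]

lemma frobSq_conj {U : Mat3} (hU : Uᵀ * U = 1) (X : Mat3) :
    frobSq (U * X * Uᵀ) = frobSq X := by
  rw [frobSq_trace', frobSq_trace']
  have ht : (U * X * Uᵀ)ᵀ = U * Xᵀ * Uᵀ := by
    rw [Matrix.transpose_mul, Matrix.transpose_mul, Matrix.transpose_transpose,
      Matrix.mul_assoc]
  rw [ht, mat3_conj_mul hU, mat3_conj_trace hU]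

lemma diag_sq_trace (lam : Fin 3 → ℝ) :
    ((Matrix.diagonal lam) * (Matrix.diagonal lam)).trace = lam 0^2 + lam 1^2 + lam 2^2 := by
  simp [Matrix.diagonal_mul_diagonal, Matrix.trace_diagonal, Fin.sum_univ_three]
  ring

lemma diag_cube_trace (lam : Fin 3 → ℝ) :
    ((Matrix.diagonal lam) * (Matrix.diagonal lam) * (Matrix.diagonal lam)).trace
      = lam 0^3 + lam 1^3 + lam 2^3 := by
  simp [Matrix.diagonal_mul_diagonal, Matrix.trace_diagonal, Fin.sum_univ_three]
  ring

lemma Nset_conj (a b c : ℝ) {U : Mat3} (hU : Uᵀ * U = 1) (hU2 : U * Uᵀ = 1)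
    {N : Mat3} (hN : N ∈ Nset a b c) : U * N * Uᵀ ∈ Nset a b c := by
  obtain ⟨n, hn, rfl⟩ := hN
  have hn3 : n 0 ^ 2 + n 1 ^ 2 + n 2 ^ 2 = 1 := by
    simpa [Fin.sum_univ_three] using hn
  refine ⟨U.mulVec n, ?_, ?_⟩
  · have e00 := congrFun (congrFun hU 0) 0
    have e01 := congrFun (congrFun hU 0) 1
    have e02 := congrFun (congrFun hU 0) 2
    have e11 := congrFun (congrFun hU 1) 1
    have e12 := congrFun (congrFun hU 1) 2
    have e22 := congrFun (congrFun hU 2) 2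
    simp [Matrix.mul_apply, Matrix.transpose_apply, Matrix.one_apply, Fin.sum_univ_three]
      at e00 e01 e02 e11 e12 e22
    simp [Matrix.mulVec, dotProduct, Fin.sum_univ_three]
    linear_combination n 0^2 * e00 + n 1^2 * e11 + n 2^2 * e22 + 2*n 0*n 1 * e01
      + 2*n 0*n 2 * e02 + 2*n 1*n 2 * e12 + hn3
  · ext i j
    have f := congrFun (congrFun hU2 i) j
    simp only [Matrix.mul_apply, Matrix.transpose_apply] at f
    by_cases hij : i = j <;>
      simp [hij, Matrix.mul_apply, Matrix.transpose_apply, Matrix.smul_apply, Matrix.sub_apply,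
        Matrix.one_apply, outer, Matrix.mulVec, dotProduct, Fin.sum_univ_three,
        smul_eq_mul] at f ⊢ <;>
      linear_combination (-(sPlus a b c)/3) * f

lemma diag_frobSq (a b c : ℝ) (lam : Fin 3 → ℝ) (htr : lam 0 + lam 1 + lam 2 = 0)
    (n : Fin 3 → ℝ) (hn : n 0 ^ 2 + n 1 ^ 2 + n 2 ^ 2 = 1) :
    frobSq (Matrix.diagonal lam - sPlus a b c • (outer n - (1 / 3 : ℝ) • (1 : Mat3))) =
      (lam 0 ^ 2 + lam 1 ^ 2 + lam 2 ^ 2)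
        - 2 * sPlus a b c * (lam 0 * n 0 ^ 2 + lam 1 * n 1 ^ 2 + lam 2 * n 2 ^ 2)
        + 2 * (sPlus a b c) ^ 2 / 3 := by
  simp [frobSq, Fin.sum_univ_three, Matrix.sub_apply, Matrix.smul_apply,
    Matrix.diagonal_apply, Matrix.one_apply, outer, smul_eq_mul]
  linear_combination (2 * (sPlus a b c) / 3) * htr
    + (sPlus a b c) ^ 2 * (n 0 ^ 2 + n 1 ^ 2 + n 2 ^ 2 + 1/3) * hn

set_option maxHeartbeats 1000000 in
lemma keycore (s B Cc m δ : ℝ) (hs : 0 < s) (hB : 0 < B) (hC : 0 < Cc) (hm : 0 < m)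
    (hql : ∀ x y : ℝ, m*(x^2+y^2) ≤ Cc*s^2*x^2 + B*s*(x*y+y^2))
    (hδ0 : 0 < δ) (hδ1 : δ ≤ 1) (hδG : (B + 4*Cc*s + 3*Cc)*δ ≤ m/2) :
    ∀ x y : ℝ, x^2+y^2 ≤ δ^2 →
      m/2*(x^2+y^2) ≤ Cc*s^2*x^2 + B*s*(x*y+y^2) + (B+2*Cc*s)*(x^2*y+x*y^2)
          + 2*Cc*s*x^3 + Cc*(x^2+x*y+y^2)^2
      ∧ Cc*s^2*x^2 + B*s*(x*y+y^2) + (B+2*Cc*s)*(x^2*y+x*y^2)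
          + 2*Cc*s*x^3 + Cc*(x^2+x*y+y^2)^2 ≤ (Cc*s^2 + 2*B*s + m/2)*(x^2+y^2) := by
  intro x y hd2
  have hrr : (0:ℝ) ≤ x^2+y^2 := by positivity
  have hyl : -δ ≤ y := by nlinarith [hd2, hδ0, sq_nonneg x]
  have hyu : y ≤ δ := by nlinarith [hd2, hδ0, sq_nonneg x]
  have hxl : -δ ≤ x := by nlinarith [hd2, hδ0, sq_nonneg y]
  have hxu : x ≤ δ := by nlinarith [hd2, hδ0, sq_nonneg y]
  have p1l : -δ*x^2 ≤ x^2*y := by nlinarith [sq_nonneg x, hyl]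
  have p1u : x^2*y ≤ δ*x^2 := by nlinarith [sq_nonneg x, hyu]
  have p2l : -δ*y^2 ≤ x*y^2 := by nlinarith [sq_nonneg y, hxl]
  have p2u : x*y^2 ≤ δ*y^2 := by nlinarith [sq_nonneg y, hxu]
  have p3l : -δ*x^2 ≤ x^3 := by nlinarith [sq_nonneg x, hxl]
  have p3u : x^3 ≤ δ*x^2 := by nlinarith [sq_nonneg x, hxu]
  have htql : (0:ℝ) ≤ x^2+x*y+y^2 := by nlinarith [sq_nonneg (x+y), sq_nonneg x, sq_nonneg y]
  have htqu : x^2+x*y+y^2 ≤ (3/2)*(x^2+y^2) := by nlinarith [sq_nonneg (x-y)]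
  have t1 : (x^2+x*y+y^2)^2 ≤ ((3/2)*(x^2+y^2))^2 := pow_le_pow_left₀ htql htqu 2
  have t2 : (9/4)*(x^2+y^2)*(x^2+y^2) ≤ (9/4)*(x^2+y^2)*δ^2 :=
    mul_le_mul_of_nonneg_left hd2 (by positivity)
  have hq4 : (x^2+x*y+y^2)^2 ≤ (9/4)*δ^2*(x^2+y^2) := by linarith [t1, t2]
  have hcoef1 : (0:ℝ) ≤ B + 2*Cc*s := by nlinarith [mul_pos hC hs]
  have hcoef2 : (0:ℝ) ≤ 2*Cc*s := by nlinarith [mul_pos hC hs]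
  have c1l := mul_le_mul_of_nonneg_left (add_le_add p1l p2l) hcoef1
  have c1u := mul_le_mul_of_nonneg_left (add_le_add p1u p2u) hcoef1
  have c2l := mul_le_mul_of_nonneg_left p3l hcoef2
  have c2u := mul_le_mul_of_nonneg_left p3u hcoef2
  have c3l : (0:ℝ) ≤ Cc*(x^2+x*y+y^2)^2 := by positivity
  have c3u : Cc*(x^2+x*y+y^2)^2 ≤ Cc*((9/4)*δ^2*(x^2+y^2)) :=
    mul_le_mul_of_nonneg_left hq4 (le_of_lt hC)
  have c5 : (0:ℝ) ≤ (m/2 - (B + 4*Cc*s + 3*Cc)*δ)*(x^2+y^2) :=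
    mul_nonneg (by linarith) hrr
  have c6 : (0:ℝ) ≤ 2*Cc*s*(δ*y^2) := by positivity
  have c7 : (0:ℝ) ≤ 3*Cc*(δ*x^2) := by positivity
  have c8 : (0:ℝ) ≤ 3*Cc*(δ*y^2) := by positivity
  have c9 : (0:ℝ) ≤ (9/4)*Cc*(δ*((1-δ)*(x^2+y^2))) :=
    mul_nonneg (by positivity) (mul_nonneg (le_of_lt hδ0)
      (mul_nonneg (by linarith) hrr))
  have hqu : Cc*s^2*x^2 + B*s*(x*y+y^2) ≤ (Cc*s^2+2*B*s)*(x^2+y^2) := by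
    have k1 : (0:ℝ) ≤ Cc*s^2*y^2 := by positivity
    have k2 : (0:ℝ) ≤ B*s*(x-y)^2 := by positivity
    have k3 : (0:ℝ) ≤ B*s*x^2 := by positivity
    have k4 : (0:ℝ) ≤ B*s*y^2 := by positivity
    nlinarith [k1, k2, k3, k4]
  constructor
  · linarith [hql x y, c1l, c2l, c3l, c5, c6, c7, c8]
  · linarith [hqu, c1u, c2u, c3u, c5, c6, c7, c8, c9]

lemma sPlus_pos_rel (a b c : ℝ) (ha : 0 < a) (hb : 0 < b) (hc : 0 < c) :
    0 < sPlus a b c ∧ 2*c^2*(sPlus a b c)^2 = b^2*(sPlus a b c) + 3*a^2 ∧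
      b^2 < 4*c^2*(sPlus a b c) := by
  have hrpos : 0 < Real.sqrt (b^4 + 24*a^2*c^2) := Real.sqrt_pos.mpr (by positivity)
  have hr2 : (Real.sqrt (b^4 + 24*a^2*c^2))^2 = b^4 + 24*a^2*c^2 :=
    Real.sq_sqrt (by positivity)
  set r := Real.sqrt (b^4 + 24*a^2*c^2) with hrdef
  have hsv : sPlus a b c = (b^2 + r)/(4*c^2) := by rw [sPlus, hrdef]
  set s := sPlus a b c with hsdef
  have hs4 : 4*c^2*s = b^2 + r := by rw [hsv]; field_simp
  have hs : 0 < s := by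
    rw [hsv]; exact div_pos (by nlinarith [hrpos, sq_nonneg b]) (by positivity)
  have h8 : 16*c^4*s^2 - 8*b^2*c^2*s - 24*a^2*c^2 = 0 := by
    linear_combination (4*c^2*s - b^2 + r)*hs4 + hr2
  refine ⟨hs, ?_, ?_⟩
  · have h8c : (8:ℝ)*c^2 ≠ 0 := by positivity
    apply mul_left_cancel₀ h8c; linear_combination h8
  · nlinarith [hs4, hrpos]

set_option maxHeartbeats 1000000 in
lemma key (a b c : ℝ) (ha : 0 < a) (hb : 0 < b) (hc : 0 < c) :
    ∃ δ : ℝ, 0 < δ ∧ ∃ C : ℝ, 1 ≤ C ∧ ∀ u v w : ℝ, u + v + w = 0 →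
      u^2+v^2+w^2 - 2*sPlus a b c*u + 2*(sPlus a b c)^2/3 ≤ δ^2 →
      C⁻¹ * (u^2+v^2+w^2 - 2*sPlus a b c*u + 2*(sPlus a b c)^2/3)
          ≤ -(a^2/2)*(u^2+v^2+w^2) - (b^2/3)*(u^3+v^3+w^3)
            + (c^2/4)*(u^2+v^2+w^2)^2 + C0 a b c
      ∧ -(a^2/2)*(u^2+v^2+w^2) - (b^2/3)*(u^3+v^3+w^3)
            + (c^2/4)*(u^2+v^2+w^2)^2 + C0 a b c
          ≤ C * (u^2+v^2+w^2 - 2*sPlus a b c*u + 2*(sPlus a b c)^2/3) := by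
  obtain ⟨hs, hrel, hb4⟩ := sPlus_pos_rel a b c ha hb hc
  set s := sPlus a b c with hsdef
  have hden : (0:ℝ) < 4*(c^2*s^2 + b^2*s) := by
    have h1 := mul_pos (pow_pos hc 2) (pow_pos hs 2)
    have h2 := mul_pos (pow_pos hb 2) hs
    linarith
  have hnum : (0:ℝ) < 4*(c^2*s^2)*(b^2*s) - (b^2*s)^2 := by
    have h : 4*(c^2*s^2)*(b^2*s) - (b^2*s)^2 = (b^2*s)*(s*(4*c^2*s - b^2)) := by ring
    rw [h]
    exact mul_pos (mul_pos (pow_pos hb 2) hs) (mul_pos hs (by linarith))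
  set m := (4*(c^2*s^2)*(b^2*s) - (b^2*s)^2)/(4*(c^2*s^2 + b^2*s)) with hmdef
  have hm : 0 < m := div_pos hnum hden
  have hql : ∀ x y : ℝ, m*(x^2+y^2) ≤ c^2*s^2*x^2 + b^2*s*(x*y+y^2) := by
    intro x y
    rw [hmdef, div_mul_eq_mul_div, div_le_iff₀ hden]
    nlinarith [sq_nonneg (2*(c^2*s^2)*x + (b^2*s)*y), sq_nonneg ((b^2*s)*x + 2*(b^2*s)*y)]
  have hG : (0:ℝ) < b^2 + 4*c^2*s + 3*c^2 := by
    have h1 := pow_pos hb 2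
    have h2 := mul_pos (pow_pos hc 2) hs
    have h3 := pow_pos hc 2
    linarith
  set δ := min 1 (m/(2*(b^2 + 4*c^2*s + 3*c^2))) with hδdef
  have hδ0 : 0 < δ := lt_min one_pos (div_pos hm (by linarith))
  have hδ1 : δ ≤ 1 := min_le_left _ _
  have hδG : (b^2 + 4*c^2*s + 3*c^2)*δ ≤ m/2 := by
    have h2 : δ ≤ m/(2*(b^2 + 4*c^2*s + 3*c^2)) := min_le_right _ _
    have h3 := mul_le_mul_of_nonneg_left h2 (le_of_lt hG)
    calc (b^2 + 4*c^2*s + 3*c^2)*δ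
        ≤ (b^2 + 4*c^2*s + 3*c^2)*(m/(2*(b^2 + 4*c^2*s + 3*c^2))) := h3
      _ = m/2 := by field_simp
  have hcore := keycore s (b^2) (c^2) m δ hs (pow_pos hb 2) (pow_pos hc 2) hm hql hδ0 hδ1 hδG
  set Cst := max (max (6/m) (c^2*s^2 + 2*b^2*s + m/2)) 1 with hCdef
  refine ⟨δ, hδ0, Cst, le_max_right _ _, ?_⟩
  intro u v w hsum h
  obtain ⟨x, hx⟩ : ∃ x, u = x + 2*s/3 := ⟨u - 2*s/3, by ring⟩
  subst hx
  obtain ⟨y, hy⟩ : ∃ y, v = y - s/3 := ⟨v + s/3, by ring⟩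
  subst hy
  have hw : w = -x - y - s/3 := by linarith
  subst hw
  have hxyδ : x^2+y^2 ≤ δ^2 := by linarith [h, sq_nonneg (x+y)]
  obtain ⟨hlow, hup⟩ := hcore x y hxyδ
  have hFeq : -(a^2/2)*((x+2*s/3)^2+(y-s/3)^2+(-x-y-s/3)^2)
        - (b^2/3)*((x+2*s/3)^3+(y-s/3)^3+(-x-y-s/3)^3)
        + (c^2/4)*((x+2*s/3)^2+(y-s/3)^2+(-x-y-s/3)^2)^2 + C0 a b c
      = c^2*s^2*x^2 + b^2*s*(x*y+y^2) + (b^2+2*c^2*s)*(x^2*y+x*y^2)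
        + 2*c^2*s*x^3 + c^2*(x^2+x*y+y^2)^2 := by
    rw [C0, ← hsdef]
    linear_combination (s*x/3 + (x^2+y^2+(x+y)^2)/6) * hrel
  have hd2eq : (x+2*s/3)^2+(y-s/3)^2+(-x-y-s/3)^2 - 2*s*(x+2*s/3) + 2*s^2/3
      = 2*(x^2+x*y+y^2) := by ring
  have hC6 : 6/m ≤ Cst := le_trans (le_max_left _ _) (le_max_left _ _)
  have hCK : c^2*s^2+2*b^2*s + m/2 ≤ Cst := le_trans (le_max_right _ _) (le_max_left _ _)
  have hC1 : (1:ℝ) ≤ Cst := le_max_right _ _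
  have hCinv : Cst⁻¹ ≤ m/6 := by
    have h6m : (0:ℝ) < 6/m := by positivity
    have h7 := inv_anti₀ h6m hC6
    rwa [inv_div] at h7
  have ht0 : (0:ℝ) ≤ 2*(x^2+x*y+y^2) := by
    linarith [sq_nonneg (x+y), sq_nonneg x, sq_nonneg y]
  constructor
  · have ht3 : 2*(x^2+x*y+y^2) ≤ 3*(x^2+y^2) := by linarith [sq_nonneg (x-y)]
    have e1 : (0:ℝ) ≤ (m/6 - Cst⁻¹) * (2*(x^2+x*y+y^2)) := mul_nonneg (by linarith) ht0
    have e2 : (0:ℝ) ≤ m/6 * (3*(x^2+y^2) - 2*(x^2+x*y+y^2)) :=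
      mul_nonneg (by linarith) (by linarith)
    linarith [hlow, e1, e2, hFeq, hd2eq]
  · have hrr2t : x^2+y^2 ≤ 2*(x^2+x*y+y^2) := by linarith [sq_nonneg (x+y)]
    have hKpos : (0:ℝ) ≤ c^2*s^2+2*b^2*s + m/2 := by
      have k1 := mul_pos (pow_pos hc 2) (pow_pos hs 2)
      have k2 := mul_pos (pow_pos hb 2) hs
      linarith
    have e3 : (0:ℝ) ≤ (c^2*s^2+2*b^2*s+m/2) * (2*(x^2+x*y+y^2) - (x^2+y^2)) :=
      mul_nonneg hKpos (by linarith)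
    have e4 : (0:ℝ) ≤ (Cst - (c^2*s^2+2*b^2*s+m/2)) * (2*(x^2+x*y+y^2)) :=
      mul_nonneg (by linarith) ht0
    linarith [hup, e3, e4, hFeq, hd2eq]


set_option maxHeartbeats 4000000 in
/-- near `𝒩`, the bulk potential is comparable to the squared distance to `𝒩`. -/
theorem stmt5 (a b c : ℝ) (ha : 0 < a) (hb : 0 < b) (hc : 0 < c) :
    ∃ δ : ℝ, 0 < δ ∧ ∃ C : ℝ, 1 ≤ C ∧
      ∀ Q : Mat3, Q.IsSymm → Q.trace = 0 → distN a b c Q ≤ δ →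
        C⁻¹ * (distN a b c Q) ^ 2 ≤ fb a b c Q ∧ fb a b c Q ≤ C * (distN a b c Q) ^ 2 := by
  obtain ⟨δ, hδ0, Cst, hC1, hkey⟩ := key a b c ha hb hc
  refine ⟨δ, hδ0, Cst, hC1, ?_⟩
  intro Q hsym htr hdist
  have hherm : Q.IsHermitian := by
    rw [Matrix.IsHermitian, Matrix.conjTranspose_eq_transpose_of_trivial]; exact hsym
  set U : Mat3 := (hherm.eigenvectorUnitary : Mat3) with hUdef
  set lam : Fin 3 → ℝ := hherm.eigenvalues with hlamdef
  have hU : Uᵀ * U = 1 := by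
    have h := Matrix.mem_unitaryGroup_iff'.mp hherm.eigenvectorUnitary.2
    rwa [Matrix.star_eq_conjTranspose, Matrix.conjTranspose_eq_transpose_of_trivial] at h
  have hU2 : U * Uᵀ = 1 := by
    have h := Matrix.mem_unitaryGroup_iff.mp hherm.eigenvectorUnitary.2
    rwa [Matrix.star_eq_conjTranspose, Matrix.conjTranspose_eq_transpose_of_trivial] at h
  have hQd : Q = U * Matrix.diagonal lam * Uᵀ := by
    have h := hherm.spectral_theorem
    rwa [Unitary.conjStarAlgAut_apply, Matrix.star_eq_conjTranspose,
      Matrix.conjTranspose_eq_transpose_of_trivial, RCLike.ofReal_real_eq_id, Function.id_comp] at h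
  obtain ⟨hs, hrel, hb4⟩ := sPlus_pos_rel a b c ha hb hc
  set s := sPlus a b c with hsdef
  have htr3 : lam 0 + lam 1 + lam 2 = 0 := by
    have h := mat3_conj_trace (X := Matrix.diagonal lam) hU
    rw [← hQd, htr] at h
    simpa [Matrix.trace_diagonal, Fin.sum_univ_three] using h.symm
  have hQ2 : (Q*Q).trace = lam 0^2 + lam 1^2 + lam 2^2 := by
    rw [hQd, mat3_conj_mul hU, mat3_conj_trace hU, diag_sq_trace]
  have hQ3 : (Q*Q*Q).trace = lam 0^3 + lam 1^3 + lam 2^3 := by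
    rw [hQd, mat3_conj_mul hU, mat3_conj_mul hU, mat3_conj_trace hU, diag_cube_trace]
  obtain ⟨i0, i1, i2, n0, hmx0, hmx1, hmx2, hsum3, hp2, hp3, hn01, hn0i⟩ :
      ∃ i0 i1 i2 : Fin 3, ∃ n0 : Fin 3 → ℝ,
        (lam 0 ≤ lam i0) ∧ (lam 1 ≤ lam i0) ∧ (lam 2 ≤ lam i0)
        ∧ lam i0 + lam i1 + lam i2 = 0
        ∧ lam 0^2+lam 1^2+lam 2^2 = lam i0^2+lam i1^2+lam i2^2
        ∧ lam 0^3+lam 1^3+lam 2^3 = lam i0^3+lam i1^3+lam i2^3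
        ∧ (n0 0^2 + n0 1^2 + n0 2^2 = 1)
        ∧ (lam 0 * n0 0^2 + lam 1 * n0 1^2 + lam 2 * n0 2^2 = lam i0) := by
    rcases le_total (lam 0) (lam 1) with h01 | h01
    · rcases le_total (lam 1) (lam 2) with h12 | h12
      · exact ⟨2, 0, 1, ![0,0,1], by linarith, by linarith, le_refl _, by linarith,
          by ring, by ring, by norm_num [Matrix.cons_val_two], by norm_num [Matrix.cons_val_two]⟩
      · exact ⟨1, 0, 2, ![0,1,0], by linarith, le_refl _, by linarith, by linarith,
          by ring, by ring, by norm_num [Matrix.cons_val_two], by norm_num [Matrix.cons_val_two]⟩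
    · rcases le_total (lam 0) (lam 2) with h02 | h02
      · exact ⟨2, 1, 0, ![0,0,1], by linarith, by linarith, le_refl _, by linarith,
          by ring, by ring, by norm_num [Matrix.cons_val_two], by norm_num [Matrix.cons_val_two]⟩
      · exact ⟨0, 1, 2, ![1,0,0], le_refl _, by linarith, by linarith, by linarith,
          by ring, by ring, by norm_num [Matrix.cons_val_two], by norm_num [Matrix.cons_val_two]⟩
  have hn0sum : (∑ i, n0 i ^ 2) = 1 := by rw [Fin.sum_univ_three]; exact hn01
  have hM0mem : s • (outer n0 - (1 / 3 : ℝ) • (1 : Mat3)) ∈ Nset a b c :=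
    ⟨n0, hn0sum, by rw [hsdef]⟩
  have hfrobD : frobSq (Matrix.diagonal lam - s • (outer n0 - (1 / 3 : ℝ) • (1 : Mat3)))
      = lam i0^2 + lam i1^2 + lam i2^2 - 2*s*lam i0 + 2*s^2/3 := by
    rw [hsdef, diag_frobSq a b c lam htr3 n0 hn01, ← hsdef, hn0i]
    linarith [hp2]
  have hd2nonneg : 0 ≤ lam i0^2 + lam i1^2 + lam i2^2 - 2*s*lam i0 + 2*s^2/3 := by
    rw [← hfrobD]; exact frobSq_nonneg' _
  have hmemS : ∃ N ∈ Nset a b c,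
      Real.sqrt (lam i0^2 + lam i1^2 + lam i2^2 - 2*s*lam i0 + 2*s^2/3) = frob (Q - N) := by
    refine ⟨U * (s • (outer n0 - (1 / 3 : ℝ) • (1 : Mat3))) * Uᵀ,
      Nset_conj a b c hU hU2 hM0mem, ?_⟩
    have hsub : Q - U * (s • (outer n0 - (1 / 3 : ℝ) • (1 : Mat3))) * Uᵀ
        = U * (Matrix.diagonal lam - s • (outer n0 - (1 / 3 : ℝ) • (1 : Mat3))) * Uᵀ := by
      rw [hQd, Matrix.mul_sub, Matrix.sub_mul]
    rw [hsub, frob, frobSq_conj hU, hfrobD]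
  have hlb : ∀ N ∈ Nset a b c,
      Real.sqrt (lam i0^2 + lam i1^2 + lam i2^2 - 2*s*lam i0 + 2*s^2/3) ≤ frob (Q - N) := by
    intro N hN
    have hsub : Q - N = U * (Matrix.diagonal lam - Uᵀ*N*U) * Uᵀ := by
      rw [hQd, Matrix.mul_sub, Matrix.sub_mul]
      congr 1
      rw [← Matrix.mul_assoc, ← Matrix.mul_assoc, hU2, Matrix.one_mul,
        Matrix.mul_assoc, hU2, Matrix.mul_one]
    have hmem : Uᵀ*N*U ∈ Nset a b c := by
      have h1 : (Uᵀ)ᵀ * Uᵀ = 1 := by rw [Matrix.transpose_transpose]; exact hU2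
      have h2 : Uᵀ * (Uᵀ)ᵀ = 1 := by rw [Matrix.transpose_transpose]; exact hU
      have h3 := Nset_conj a b c h1 h2 hN
      rwa [Matrix.transpose_transpose] at h3
    rw [hsub, frob, frobSq_conj hU]
    apply Real.sqrt_le_sqrt
    obtain ⟨nn, hnn, hNeq⟩ := hmem
    have hnn3 : nn 0^2 + nn 1^2 + nn 2^2 = 1 := by simpa [Fin.sum_univ_three] using hnn
    rw [hNeq, diag_frobSq a b c lam htr3 nn hnn3, ← hsdef]
    have hmul : lam i0 * (nn 0^2 + nn 1^2 + nn 2^2) = lam i0 * 1 := by rw [hnn3]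
    have q0 := mul_nonneg (sub_nonneg.mpr hmx0) (sq_nonneg (nn 0))
    have q1 := mul_nonneg (sub_nonneg.mpr hmx1) (sq_nonneg (nn 1))
    have q2 := mul_nonneg (sub_nonneg.mpr hmx2) (sq_nonneg (nn 2))
    have hbound : lam 0 * nn 0^2 + lam 1 * nn 1^2 + lam 2 * nn 2^2 ≤ lam i0 := by
      linarith [hmul, q0, q1, q2]
    have hfin := mul_nonneg (le_of_lt hs) (sub_nonneg.mpr hbound)
    linarith [hfin, hp2]
  have hdist_eq : distN a b c Q
      = Real.sqrt (lam i0^2 + lam i1^2 + lam i2^2 - 2*s*lam i0 + 2*s^2/3) := by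
    rw [distN]
    refine le_antisymm (csInf_le ⟨0, ?_⟩ ?_) (le_csInf ?_ ?_)
    · rintro d ⟨N, hN, rfl⟩
      exact frob_nonneg' _
    · obtain ⟨N, hN, hEq⟩ := hmemS
      exact ⟨N, hN, hEq⟩
    · obtain ⟨N, hN, hEq⟩ := hmemS
      exact ⟨_, N, hN, hEq⟩
    · rintro d ⟨N, hN, rfl⟩
      exact hlb N hN
  have hdist_sq : (distN a b c Q)^2
      = lam i0^2 + lam i1^2 + lam i2^2 - 2*s*lam i0 + 2*s^2/3 := by
    rw [hdist_eq]; exact Real.sq_sqrt hd2nonneg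
  have hd2le : lam i0^2 + lam i1^2 + lam i2^2 - 2*s*lam i0 + 2*s^2/3 ≤ δ^2 := by
    have h2 : 0 ≤ distN a b c Q := by rw [hdist_eq]; exact Real.sqrt_nonneg _
    calc lam i0^2 + lam i1^2 + lam i2^2 - 2*s*lam i0 + 2*s^2/3
        = (distN a b c Q)^2 := hdist_sq.symm
      _ ≤ δ^2 := pow_le_pow_left₀ h2 hdist 2
  have hfb : fb a b c Q = -(a^2/2)*(lam i0^2+lam i1^2+lam i2^2)
      - (b^2/3)*(lam i0^3+lam i1^3+lam i2^3)
      + (c^2/4)*(lam i0^2+lam i1^2+lam i2^2)^2 + C0 a b c := by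
    rw [fb, hQ2, hQ3, hp2, hp3]
  obtain ⟨hk1, hk2⟩ := hkey (lam i0) (lam i1) (lam i2) hsum3 hd2le
  constructor
  · calc Cst⁻¹ * (distN a b c Q)^2
        = Cst⁻¹ * (lam i0^2+lam i1^2+lam i2^2 - 2*s*lam i0 + 2*s^2/3) := by rw [hdist_sq]
      _ ≤ -(a^2/2)*(lam i0^2+lam i1^2+lam i2^2) - (b^2/3)*(lam i0^3+lam i1^3+lam i2^3)
          + (c^2/4)*(lam i0^2+lam i1^2+lam i2^2)^2 + C0 a b c := by
          linarith [hk1]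
      _ = fb a b c Q := hfb.symm
  · calc fb a b c Q
        = -(a^2/2)*(lam i0^2+lam i1^2+lam i2^2) - (b^2/3)*(lam i0^3+lam i1^3+lam i2^3)
          + (c^2/4)*(lam i0^2+lam i1^2+lam i2^2)^2 + C0 a b c := hfb
      _ ≤ Cst * (lam i0^2+lam i1^2+lam i2^2 - 2*s*lam i0 + 2*s^2/3) := by linarith [hk2]
      _ = Cst * (distN a b c Q)^2 := by rw [hdist_sq]


end
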